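/- arXiv:2408.05535 — 3 statements merged into one kernel-verified Lean document; each statement's English description precedes it below -/
import Mathlib

section
/- Let Z be a classification matrix with no empty classes, let X ∈ ℝ^{K×K}, and let U = Z X ∈ ℝ^{N×K} satisfy U'U = I_{K×K}. Then X is invertible and X X' = (Z'Z)^{-1}, i.e., X X' is the diagonal matrix with k-th diagonal entry 1/N_k. (This is the key identity behind Lemma 1, part 2, used for both the SVD-based matrix U = ZX and the eigenvector matrix V = ZY.) -/
open Matrix Finset

/-- key identity behind Lemma 1, parts 2 and 3: if `Z` is a
classification matrix with no empty classes, `U = Z * X` and `Uᵀ * U = I`, then `X`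
is invertible and `X * Xᵀ = (Zᵀ * Z)⁻¹`, the diagonal matrix with entries `1 / N_k`. -/
theorem XXt_eq_inv_ZtZ {N K : ℕ}
    (ℓ : Fin N → Fin K) (hsurj : Function.Surjective ℓ)
    (Z : Matrix (Fin N) (Fin K) ℝ)
    (hZ : ∀ i k, Z i k = if ℓ i = k then 1 else 0)
    (Nk : Fin K → ℕ)
    (hNk : ∀ k, Nk k = (Finset.univ.filter fun i => ℓ i = k).card)
    (X : Matrix (Fin K) (Fin K) ℝ)
    (U : Matrix (Fin N) (Fin K) ℝ)
    (hU : U = Z * X)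
    (horth : Uᵀ * U = 1) :
    IsUnit X ∧ X * Xᵀ = (Zᵀ * Z)⁻¹ ∧
      X * Xᵀ = Matrix.diagonal fun k => 1 / (Nk k : ℝ) := by
  have hNkpos : ∀ k, 0 < Nk k := by
    intro k
    rw [hNk k]
    obtain ⟨i, hi⟩ := hsurj k
    exact Finset.card_pos.mpr ⟨i, by simp [hi]⟩
  have hNkne : ∀ k, (Nk k : ℝ) ≠ 0 := fun k =>
    Nat.cast_ne_zero.mpr (hNkpos k).ne'
  -- Zᵀ * Z is diagonal
  have hD : Zᵀ * Z = Matrix.diagonal fun k => (Nk k : ℝ) := by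
    ext k l
    simp only [Matrix.mul_apply, Matrix.transpose_apply, Matrix.diagonal_apply]
    by_cases hkl : k = l
    · subst hkl
      rw [if_pos rfl, hNk k, Finset.card_filter]
      push_cast
      refine Finset.sum_congr rfl fun i _ => ?_
      by_cases h : ℓ i = k <;> simp [hZ, h]
    · rw [if_neg hkl]
      refine Finset.sum_eq_zero fun i _ => ?_
      by_cases h : ℓ i = k
      · have : ℓ i ≠ l := h ▸ hkl
        simp [hZ, h, this, hkl]
      · simp [hZ, h]
  set D := Matrix.diagonal fun k => (Nk k : ℝ) with hDdef
  have hkey : Xᵀ * D * X = 1 := by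
    have := horth
    rw [hU, Matrix.transpose_mul, Matrix.mul_assoc, ← Matrix.mul_assoc Zᵀ Z X,
      hD] at this
    rw [Matrix.mul_assoc]
    exact this
  have hXunit : IsUnit X := IsUnit.of_mul_eq_one_right (Xᵀ * D)
    hkey
  have hdet : IsUnit X.det := (Matrix.isUnit_iff_isUnit_det X).mp hXunit
  have h1 : (X * Xᵀ * D) * X = 1 * X := by
    rw [one_mul, Matrix.mul_assoc, Matrix.mul_assoc, ← Matrix.mul_assoc Xᵀ D X,
      hkey, Matrix.mul_one]
  have hXXtD : X * Xᵀ * D = 1 := by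
    have h2 := congrArg (fun M => M * X⁻¹) h1
    simpa [Matrix.mul_assoc, Matrix.mul_nonsing_inv X hdet] using h2
  have hDXXt : D * (X * Xᵀ) = 1 := mul_eq_one_comm.mp hXXtD
  have hinv : D⁻¹ = X * Xᵀ := Matrix.inv_eq_right_inv hDXXt
  refine ⟨hXunit, ?_, ?_⟩
  · rw [hD]; exact hinv.symm
  · have hDinv : D⁻¹ = Matrix.diagonal fun k => 1 / (Nk k : ℝ) :=
      Matrix.inv_eq_right_inv (by
        rw [hDdef, Matrix.diagonal_mul_diagonal]
        convert Matrix.diagonal_one with k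
        rw [mul_one_div, div_self (hNkne _)])
    rw [← hinv, hDinv]
end

section
/- Let Z be a classification matrix with no empty classes, let X ∈ ℝ^{K×K}, and let U = Z X satisfy U'U = I_{K×K}. Then for all k, k̃ ∈ [K] with k ≠ k̃, the Euclidean distance between the k-th and k̃-th rows of X equals √(1/N_k + 1/N_{k̃}), i.e., ‖X(k,:) − X(k̃,:)‖_F = √(1/N_k + 1/N_{k̃}). (Equation (3)/(4) of Lemma 1.) -/
open Matrix Finset

/-- Equations (3)/(4) of Lemma 1: if `Z` is a classification matrix
with no empty classes, `U = Z * X` and `Uᵀ * U = I`, then for `k ≠ k₂` the Euclidean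
distance between the `k`-th and `k₂`-th rows of `X` is `√(1/N_k + 1/N_k₂)`. -/
theorem row_distance_of_X {N K : ℕ}
    (ℓ : Fin N → Fin K) (hsurj : Function.Surjective ℓ)
    (Z : Matrix (Fin N) (Fin K) ℝ)
    (hZ : ∀ i k, Z i k = if ℓ i = k then 1 else 0)
    (Nk : Fin K → ℕ)
    (hNk : ∀ k, Nk k = (Finset.univ.filter fun i => ℓ i = k).card)
    (X : Matrix (Fin K) (Fin K) ℝ)
    (U : Matrix (Fin N) (Fin K) ℝ)
    (hU : U = Z * X)
    (horth : Uᵀ * U = 1) :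
    ∀ k k₂ : Fin K, k ≠ k₂ →
      Real.sqrt (∑ j, (X k j - X k₂ j) ^ 2) =
        Real.sqrt (1 / (Nk k : ℝ) + 1 / (Nk k₂ : ℝ)) := by
  -- Nk k positive
  have hNkpos : ∀ k, (0 : ℝ) < (Nk k : ℝ) := by
    intro k
    have : 0 < Nk k := by
      rw [hNk]
      obtain ⟨i, hi⟩ := hsurj k
      exact Finset.card_pos.mpr ⟨i, by simp [hi]⟩
    exact_mod_cast this
  have hNkne : ∀ k, ((Nk k : ℝ)) ≠ 0 := fun k => ne_of_gt (hNkpos k)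
  -- ZᵀZ is diagonal with entries Nk
  have hZZ : Zᵀ * Z = Matrix.diagonal (fun k => (Nk k : ℝ)) := by
    ext a b
    simp only [Matrix.mul_apply, Matrix.transpose_apply, hZ, Matrix.diagonal_apply]
    by_cases hab : a = b
    · subst hab
      simp only [if_pos rfl]
      rw [hNk a]
      rw [Finset.card_filter]
      push_cast
      apply Finset.sum_congr rfl
      intro i _
      by_cases h : ℓ i = a <;> simp [h]
    · rw [if_neg hab]
      apply Finset.sum_eq_zero
      intro i _
      by_cases h : ℓ i = a
      · have : ℓ i ≠ b := h ▸ hab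
        simp [h, this, hab]
      · simp [h]
  -- X * Xᵀ * D = 1
  have h1 : Xᵀ * Matrix.diagonal (fun k => (Nk k : ℝ)) * X = 1 := by
    rw [← hZZ]
    rw [hU, Matrix.transpose_mul] at horth
    calc Xᵀ * (Zᵀ * Z) * X = Xᵀ * Zᵀ * (Z * X) := by
          rw [Matrix.mul_assoc, Matrix.mul_assoc, Matrix.mul_assoc]
      _ = 1 := horth
  have h2 : X * (Xᵀ * Matrix.diagonal (fun k => (Nk k : ℝ))) = 1 :=
    mul_eq_one_comm.mp h1
  have h3 : X * Xᵀ * Matrix.diagonal (fun k => (Nk k : ℝ)) = 1 := by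
    rw [Matrix.mul_assoc]; exact h2
  -- entrywise consequences
  have hentry : ∀ a b, (X * Xᵀ) a b * (Nk b : ℝ) = if a = b then 1 else 0 := by
    intro a b
    have := congrFun (congrFun h3 a) b
    rwa [Matrix.mul_diagonal, Matrix.one_apply] at this
  intro k k₂ hkk
  have hdk : (X * Xᵀ) k k = 1 / (Nk k : ℝ) := by
    have := hentry k k
    rw [if_pos rfl] at this
    rw [eq_div_iff (hNkne k)]
    exact this
  have hdk₂ : (X * Xᵀ) k₂ k₂ = 1 / (Nk k₂ : ℝ) := by
    have := hentry k₂ k₂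
    rw [if_pos rfl] at this
    rw [eq_div_iff (hNkne k₂)]
    exact this
  have hoff : (X * Xᵀ) k k₂ = 0 := by
    have := hentry k k₂
    rw [if_neg hkk] at this
    exact (mul_eq_zero.mp this).resolve_right (hNkne k₂)
  have key : ∑ j, (X k j - X k₂ j) ^ 2 =
      (X * Xᵀ) k k - 2 * (X * Xᵀ) k k₂ + (X * Xᵀ) k₂ k₂ := by
    simp only [Matrix.mul_apply, Matrix.transpose_apply, Finset.mul_sum,
      ← Finset.sum_add_distrib, ← Finset.sum_sub_distrib]
    apply Finset.sum_congr rfl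
    intro j _
    ring
  rw [key, hdk, hdk₂, hoff]
  ring_nf
end

section
/- Let Z be a classification matrix with no empty classes, let μ ≥ 0, and let A ∈ ℝ^{J×K} satisfy ‖A w‖² ≥ μ ‖w‖² for all w ∈ ℝ^K. Then for every v ∈ ℝ^K, ‖A (Z'Z) v‖² ≥ N_min · μ · ‖Z v‖², where N_min = min_{k∈[K]} N_k. Since the column space of Z has dimension K, this implies that the K-th largest singular value of Z A' satisfies σ_K(Z A') ≥ √(N_min · μ). (This is Equation (Reig) in the proof of Theorem 1: σ_K(𝓡_sum) ≥ ρ √(N_min) σ_K(∑_{l∈[L]} B_l), where 𝓡_sum = ρ Z (∑_{l∈[L]} B_l)'.) -/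
open Matrix Finset

/-- The `k`-th largest singular value of a matrix, via the Courant–Fischer max–min
characterization: the supremum of all `c ≥ 0` such that `‖A v‖ ≥ c ‖v‖` on some
`k`-dimensional subspace. -/
noncomputable def kthSingularValue {n m : ℕ} (A : Matrix (Fin n) (Fin m) ℝ) (k : ℕ) : ℝ :=
  sSup {c : ℝ | 0 ≤ c ∧ ∃ W : Submodule ℝ (Fin m → ℝ), Module.finrank ℝ W = k ∧
    ∀ v ∈ W, c * Real.sqrt (∑ j, v j ^ 2) ≤ Real.sqrt (∑ i, (A.mulVec v) i ^ 2)}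

/-- Cauchy–Schwarz style bound: the singular-value candidate set is bounded above. -/
lemma kthSV_bddAbove {n m : ℕ} (M : Matrix (Fin n) (Fin m) ℝ) (k : ℕ) (hk : 0 < k) :
    BddAbove {c : ℝ | 0 ≤ c ∧ ∃ W : Submodule ℝ (Fin m → ℝ), Module.finrank ℝ W = k ∧
      ∀ v ∈ W, c * Real.sqrt (∑ j, v j ^ 2) ≤ Real.sqrt (∑ i, (M.mulVec v) i ^ 2)} := by
  refine ⟨Real.sqrt (∑ i, ∑ j, M i j ^ 2), ?_⟩
  rintro c ⟨hc0, W, hW, hWc⟩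
  -- W is nonzero, pick a nonzero vector
  have hWbot : W ≠ ⊥ := by
    intro h
    rw [h, finrank_bot] at hW
    omega
  obtain ⟨v, hvW, hv0⟩ := Submodule.exists_mem_ne_zero_of_ne_bot hWbot
  obtain ⟨j, hj⟩ : ∃ j, v j ≠ 0 := by
    by_contra h
    push_neg at h
    exact hv0 (funext h)
  have hvpos : 0 < ∑ j, v j ^ 2 := by
    refine Finset.sum_pos' (fun i _ => sq_nonneg _) ⟨j, Finset.mem_univ j, ?_⟩
    exact lt_of_le_of_ne (sq_nonneg _) (Ne.symm (pow_ne_zero _ hj))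
  have hsq : 0 < Real.sqrt (∑ j, v j ^ 2) := Real.sqrt_pos.mpr hvpos
  have hbound : ∑ i, (M.mulVec v) i ^ 2 ≤ (∑ i, ∑ j, M i j ^ 2) * ∑ j, v j ^ 2 := by
    rw [Finset.sum_mul]
    refine Finset.sum_le_sum fun i _ => ?_
    simpa [Matrix.mulVec, dotProduct] using
      Finset.sum_mul_sq_le_sq_mul_sq Finset.univ (fun j => M i j) v
  have h1 := hWc v hvW
  have h2 : Real.sqrt (∑ i, (M.mulVec v) i ^ 2) ≤
      Real.sqrt (∑ i, ∑ j, M i j ^ 2) * Real.sqrt (∑ j, v j ^ 2) := by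
    rw [← Real.sqrt_mul (by positivity)]
    exact Real.sqrt_le_sqrt hbound
  have := le_trans h1 h2
  exact le_of_mul_le_mul_right this hsq

/-- Equation (Reig) in the proof of Theorem 1: for a classification
matrix `Z` with no empty classes, `μ ≥ 0`, and `A : J×K` with `‖Aw‖² ≥ μ‖w‖²`,
one has `‖A (ZᵀZ) v‖² ≥ N_min μ ‖Zv‖²` for all `v`, and consequently
`σ_K(Z Aᵀ) ≥ √(N_min μ)`. -/
theorem sigmaK_ZAt_lower_bound {N K J : ℕ} (hK : 0 < K)
    (ℓ : Fin N → Fin K) (hsurj : Function.Surjective ℓ)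
    (Z : Matrix (Fin N) (Fin K) ℝ)
    (hZ : ∀ i k, Z i k = if ℓ i = k then 1 else 0)
    (Nk : Fin K → ℕ)
    (hNk : ∀ k, Nk k = (Finset.univ.filter fun i => ℓ i = k).card)
    (Nmin : ℕ) (hle : ∀ k, Nmin ≤ Nk k) (hmem : ∃ k, Nk k = Nmin)
    (μ : ℝ) (hμ : 0 ≤ μ)
    (A : Matrix (Fin J) (Fin K) ℝ)
    (hA : ∀ w : Fin K → ℝ, μ * ∑ k, w k ^ 2 ≤ ∑ j, (A.mulVec w) j ^ 2) :
    (∀ v : Fin K → ℝ,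
        (Nmin : ℝ) * μ * ∑ i, (Z.mulVec v) i ^ 2 ≤
          ∑ j, ((A * (Zᵀ * Z)).mulVec v) j ^ 2)
    ∧ Real.sqrt ((Nmin : ℝ) * μ) ≤ kthSingularValue (Z * Aᵀ) K := by
  -- Basic structure of Z
  have hZv : ∀ (v : Fin K → ℝ) (i : Fin N), Z.mulVec v i = v (ℓ i) := by
    intro v i
    simp [Matrix.mulVec, dotProduct, hZ, ite_mul]
  have hsum : ∀ f : Fin K → ℝ, ∑ i, f (ℓ i) = ∑ k, (Nk k : ℝ) * f k := by
    intro f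
    rw [← Finset.sum_fiberwise Finset.univ ℓ (fun i => f (ℓ i))]
    refine Finset.sum_congr rfl fun k _ => ?_
    have e1 : ∑ i ∈ Finset.univ.filter (fun i => ℓ i = k), f (ℓ i) =
        ∑ _i ∈ Finset.univ.filter (fun i => ℓ i = k), f k :=
      Finset.sum_congr rfl fun i hi => by rw [(Finset.mem_filter.mp hi).2]
    rw [e1, Finset.sum_const, nsmul_eq_mul, hNk k]
  have hZsq : ∀ v : Fin K → ℝ, ∑ i, (Z.mulVec v) i ^ 2 = ∑ k, (Nk k : ℝ) * v k ^ 2 := by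
    intro v
    simp only [hZv]
    exact hsum (fun k => v k ^ 2)
  have hZTsum : ∀ (y : Fin N → ℝ) (k : Fin K),
      Zᵀ.mulVec y k = ∑ i ∈ Finset.univ.filter (fun i => ℓ i = k), y i := by
    intro y k
    rw [Finset.sum_filter]
    simp [Matrix.mulVec, dotProduct, Matrix.transpose_apply, hZ, ite_mul]
  have hdiag : ∀ (v : Fin K → ℝ) (k : Fin K), (Zᵀ * Z).mulVec v k = (Nk k : ℝ) * v k := by
    intro v k
    rw [← Matrix.mulVec_mulVec, hZTsum]
    have e1 : ∑ i ∈ Finset.univ.filter (fun i => ℓ i = k), Z.mulVec v i =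
        ∑ _i ∈ Finset.univ.filter (fun i => ℓ i = k), v k :=
      Finset.sum_congr rfl fun i hi => by rw [hZv, (Finset.mem_filter.mp hi).2]
    rw [e1, Finset.sum_const, nsmul_eq_mul, hNk k]
  -- Part 1
  have part1 : ∀ v : Fin K → ℝ,
      (Nmin : ℝ) * μ * ∑ i, (Z.mulVec v) i ^ 2 ≤
        ∑ j, ((A * (Zᵀ * Z)).mulVec v) j ^ 2 := by
    intro v
    have hw : (Zᵀ * Z).mulVec v = fun k => (Nk k : ℝ) * v k := funext (hdiag v)
    rw [← Matrix.mulVec_mulVec, hw]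
    refine le_trans ?_ (hA (fun k => (Nk k : ℝ) * v k))
    rw [hZsq v, mul_assoc, Finset.mul_sum, Finset.mul_sum, Finset.mul_sum]
    refine Finset.sum_le_sum fun k _ => ?_
    have hc : (Nmin : ℝ) ≤ (Nk k : ℝ) := by exact_mod_cast hle k
    have hNn : (0 : ℝ) ≤ (Nk k : ℝ) := Nat.cast_nonneg _
    nlinarith [mul_le_mul_of_nonneg_left (mul_le_mul_of_nonneg_right hc (mul_nonneg hNn (sq_nonneg (v k)))) hμ]
  refine ⟨part1, ?_⟩
  -- Part 2
  by_cases hμ0 : μ = 0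
  · subst hμ0
    rw [mul_zero, Real.sqrt_zero]
    exact Real.sSup_nonneg fun c hc => hc.1
  have hμpos : 0 < μ := lt_of_le_of_ne hμ (Ne.symm hμ0)
  -- A is injective
  have hinj : Function.Injective A.mulVecLin := by
    rw [← LinearMap.ker_eq_bot, LinearMap.ker_eq_bot']
    intro w hw
    rw [Matrix.mulVecLin_apply] at hw
    have h := hA w
    rw [hw] at h
    simp only [Pi.zero_apply, ne_eq, OfNat.ofNat_ne_zero, not_false_eq_true, zero_pow,
      Finset.sum_const_zero] at h
    have hS0 : ∑ k, w k ^ 2 = 0 := by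
      have hSnn : 0 ≤ ∑ k, w k ^ 2 := Finset.sum_nonneg fun k _ => sq_nonneg _
      nlinarith
    funext k
    have := (Finset.sum_eq_zero_iff_of_nonneg (fun k _ => sq_nonneg (w k))).mp hS0 k
      (Finset.mem_univ k)
    exact (pow_eq_zero_iff two_ne_zero).mp this
  set W := LinearMap.range A.mulVecLin with hWdef
  have hWrank : Module.finrank ℝ W = K := by
    rw [hWdef, LinearMap.finrank_range_of_inj hinj, Module.finrank_fin_fun]
  -- membership of √(Nmin μ) in the set
  have hmemS : Real.sqrt ((Nmin : ℝ) * μ) ∈ {c : ℝ | 0 ≤ c ∧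
      ∃ W : Submodule ℝ (Fin J → ℝ), Module.finrank ℝ W = K ∧
      ∀ v ∈ W, c * Real.sqrt (∑ j, v j ^ 2) ≤
        Real.sqrt (∑ i, ((Z * Aᵀ).mulVec v) i ^ 2)} := by
    refine ⟨Real.sqrt_nonneg _, W, hWrank, ?_⟩
    intro v hv
    obtain ⟨w, hw⟩ := hv
    rw [Matrix.mulVecLin_apply] at hw
    -- key quadratic inequality
    have hq : (Nmin : ℝ) * μ * ∑ j, v j ^ 2 ≤ ∑ i, ((Z * Aᵀ).mulVec v) i ^ 2 := by
      rw [← Matrix.mulVec_mulVec, hZsq]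
      set x : Fin K → ℝ := Aᵀ.mulVec v with hx
      have hstep1 : (Nmin : ℝ) * ∑ k, x k ^ 2 ≤ ∑ k, (Nk k : ℝ) * x k ^ 2 := by
        rw [Finset.mul_sum]
        refine Finset.sum_le_sum fun k _ => ?_
        have hc : (Nmin : ℝ) ≤ (Nk k : ℝ) := by exact_mod_cast hle k
        nlinarith [sq_nonneg (x k)]
      have hstep2 : μ * ∑ j, v j ^ 2 ≤ ∑ k, x k ^ 2 := by
        -- ⟨x, w⟩ = ‖v‖²
        have hdot : ∑ k, x k * w k = ∑ j, v j ^ 2 := by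
          have h1 : dotProduct x w = dotProduct v (A.mulVec w) := by
            rw [hx, Matrix.mulVec_transpose, ← Matrix.dotProduct_mulVec]
          rw [hw] at h1
          simpa [dotProduct, pow_two] using h1
        have hCS := Finset.sum_mul_sq_le_sq_mul_sq Finset.univ x w
        rw [hdot] at hCS
        have hAw := hA w
        rw [hw] at hAw
        set S := ∑ j, v j ^ 2 with hS
        have hSnn : 0 ≤ S := Finset.sum_nonneg fun j _ => sq_nonneg _
        have hXnn : 0 ≤ ∑ k, x k ^ 2 := Finset.sum_nonneg fun k _ => sq_nonneg _
        rcases eq_or_lt_of_le hSnn with hS0 | hSpos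
        · rw [← hS0, mul_zero]; exact hXnn
        · -- S² ≤ X * Wsq, μ Wsq ≤ S, so μ S ≤ X
          have hWnn : 0 ≤ ∑ k, w k ^ 2 := Finset.sum_nonneg fun k _ => sq_nonneg _
          nlinarith [mul_le_mul_of_nonneg_left hAw hXnn,
            mul_le_mul_of_nonneg_left hCS hμpos.le]
      calc (Nmin : ℝ) * μ * ∑ j, v j ^ 2 ≤ (Nmin : ℝ) * ∑ k, x k ^ 2 := by
            rw [mul_assoc]
            exact mul_le_mul_of_nonneg_left hstep2 (Nat.cast_nonneg _)
        _ ≤ ∑ k, (Nk k : ℝ) * x k ^ 2 := hstep1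
    calc Real.sqrt ((Nmin : ℝ) * μ) * Real.sqrt (∑ j, v j ^ 2)
        = Real.sqrt ((Nmin : ℝ) * μ * ∑ j, v j ^ 2) := (Real.sqrt_mul (by positivity) _).symm
      _ ≤ Real.sqrt (∑ i, ((Z * Aᵀ).mulVec v) i ^ 2) := Real.sqrt_le_sqrt hq
  exact le_csSup (kthSV_bddAbove (Z * Aᵀ) K hK) hmemS
end
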